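/- Let c ≥ 0 and define F_c(y) = 1 + y^2/4 + y^4/64 + y^6/256 + c y^8 and N(y) = ∑_{j=0}^∞ binom(1/2,j)^2 y^{2j}. The function y ↦ F_c(y)/N(y) is increasing on [0,1] if and only if c ≥ 5/768. -/

import Mathlib

/-- The generalized binomial coefficient `r(r-1)⋯(r-j+1)/j!`. -/
noncomputable def gbinom (r : ℝ) (j : ℕ) : ℝ :=
  (∏ k ∈ Finset.range j, (r - k)) / (Nat.factorial j)

/-- `F_c(y) = 1 + y²/4 + y⁴/64 + y⁶/256 + c y⁸`. -/
noncomputable def Fc (c y : ℝ) : ℝ :=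
  1 + y ^ 2 / 4 + y ^ 4 / 64 + y ^ 6 / 256 + c * y ^ 8

/-- `N(y) = ∑_{j≥0} binom(1/2,j)² y^{2j}`, the `H¹(𝕋²)` norm of `z₁ + y z₂`. -/
noncomputable def N (y : ℝ) : ℝ := ∑' j : ℕ, gbinom (1/2) j ^ 2 * y ^ (2 * j)

namespace St10

noncomputable def a (j : ℕ) : ℝ := gbinom (1/2) j ^ 2

lemma a_nonneg (j : ℕ) : 0 ≤ a j := sq_nonneg _

lemma gbinom_succ (r : ℝ) (j : ℕ) :
    gbinom r (j+1) = gbinom r j * ((r - j) / (j+1)) := by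
  unfold gbinom
  rw [Finset.prod_range_succ, Nat.factorial_succ]
  push_cast
  rw [div_mul_div_comm]
  ring

lemma a_succ (j : ℕ) : a (j+1) = a j * ((1/2 - j) / (j+1))^2 := by
  unfold a; rw [gbinom_succ]; ring

lemma a0 : a 0 = 1 := by norm_num [a, gbinom]
lemma a1 : a 1 = 1/4 := by rw [show (1:ℕ) = 0 + 1 from rfl, a_succ, a0]; norm_num
lemma a2 : a 2 = 1/64 := by rw [show (2:ℕ) = 1 + 1 from rfl, a_succ, a1]; norm_num
lemma a3 : a 3 = 1/256 := by rw [show (3:ℕ) = 2 + 1 from rfl, a_succ, a2]; norm_num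
lemma a4 : a 4 = 25/16384 := by rw [show (4:ℕ) = 3 + 1 from rfl, a_succ, a3]; norm_num
lemma a5 : a 5 = 49/65536 := by rw [show (5:ℕ) = 4 + 1 from rfl, a_succ, a4]; norm_num
lemma a6 : a 6 = 441/1048576 := by rw [show (6:ℕ) = 5 + 1 from rfl, a_succ, a5]; norm_num
lemma a7 : a 7 = 1089/4194304 := by rw [show (7:ℕ) = 6 + 1 from rfl, a_succ, a6]; norm_num

/-- `(j+1)^3 * a (j+1) ≤ 1/4` for all `j`. -/
lemma a_cube_bound : ∀ j : ℕ, ((j:ℝ)+1)^3 * a (j+1) ≤ 1/4 := by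
  intro j
  induction j with
  | zero => simp [a1]
  | succ n ih =>
    have h2 : (0:ℝ) ≤ a (n+1) := a_nonneg _
    have expand : ((n:ℝ)+2)^3 * a (n+1+1) = ((n:ℝ)+2)*((n:ℝ)+1/2)^2 * a (n+1) := by
      rw [a_succ]
      have h3 : ((n:ℝ)+1+1) ≠ 0 := by positivity
      push_cast
      field_simp
      ring
    have hle : ((n:ℝ)+2)*((n:ℝ)+1/2)^2 * a (n+1) ≤ ((n:ℝ)+1)^3 * a (n+1) := by
      apply mul_le_mul_of_nonneg_right _ h2
      have : (0:ℝ) ≤ (n:ℝ) := Nat.cast_nonneg n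
      nlinarith [this]
    push_cast
    calc ((n:ℝ)+1+1)^3 * a (n+1+1) = ((n:ℝ)+2)^3 * a (n+1+1) := by ring_nf
      _ = ((n:ℝ)+2)*((n:ℝ)+1/2)^2 * a (n+1) := expand
      _ ≤ ((n:ℝ)+1)^3 * a (n+1) := hle
      _ ≤ 1/4 := ih

/-- telescoping sums for antitone null sequences -/
lemma telescope_hasSum (f : ℕ → ℝ) (hmono : ∀ j, f (j+1) ≤ f j)
    (h0 : Filter.Tendsto f Filter.atTop (nhds 0)) :
    HasSum (fun j => f j - f (j+1)) (f 0) := by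
  rw [hasSum_iff_tendsto_nat_of_nonneg (fun j => sub_nonneg.2 (hmono j))]
  have : ∀ n, ∑ i ∈ Finset.range n, (f i - f (i+1)) = f 0 - f n :=
    fun n => Finset.sum_range_sub' f n
  simp_rw [this]
  simpa using Filter.Tendsto.const_sub (f 0) h0

lemma hasSum_inv_succ : HasSum (fun j : ℕ => 1/((j:ℝ)+1) - 1/((j:ℝ)+1+1)) 1 := by
  have := telescope_hasSum (fun j : ℕ => 1/((j:ℝ)+1)) ?_ ?_
  · simpa using this
  · intro j
    apply one_div_le_one_div_of_le (by positivity)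
    push_cast; linarith
  · simpa using tendsto_one_div_add_atTop_nhds_zero_nat (𝕜 := ℝ)

lemma a_le (j : ℕ) : a (j+1) ≤ 1/(4*((j:ℝ)+1)^3) := by
  rw [le_div_iff₀ (by positivity : (0:ℝ) < 4*((j:ℝ)+1)^3)]
  nlinarith [a_cube_bound j]

/-- master summability bound -/
lemma summable_master : Summable (fun j : ℕ => ((j:ℝ)+4) * a j) := by
  rw [← summable_nat_add_iff 1]
  refine Summable.of_nonneg_of_le (fun j => ?_) (fun j => ?_)
    ((hasSum_inv_succ.mul_left (5/2)).summable)
  · exact mul_nonneg (by positivity) (a_nonneg _)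
  · have h2 : (0:ℝ) < (j:ℝ)+1 := by positivity
    have key : ((j:ℝ)+1+4) * (1/(4*((j:ℝ)+1)^3)) ≤ 5/2 * (1/((j:ℝ)+1) - 1/((j:ℝ)+1+1)) := by
      have e : 1/((j:ℝ)+1) - 1/((j:ℝ)+1+1) = 1/(((j:ℝ)+1)*((j:ℝ)+2)) := by
        rw [div_sub_div _ _ (by positivity) (by positivity), one_mul, mul_one]
        congr 1
        · ring
        · ring
      rw [e, mul_one_div, mul_one_div, div_le_div_iff₀ (by positivity) (by positivity)]
      nlinarith [h2, sq_nonneg ((j:ℝ)+1), mul_pos h2 h2]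
    have step := mul_le_mul_of_nonneg_left (a_le j) (show (0:ℝ) ≤ (j:ℝ)+1+4 by positivity)
    push_cast
    linarith [key, step]

lemma summable_of_le_master (g : ℕ → ℝ) (hg : ∀ j, |g j| ≤ ((j:ℝ)+4) * a j) :
    Summable g := by
  apply Summable.of_norm_bounded summable_master
  simpa using hg

lemma summable_of_le_masterC (C : ℝ) {g : ℕ → ℝ}
    (hg : ∀ j, |g j| ≤ C * (((j:ℝ)+4) * a j)) : Summable g := by
  apply Summable.of_norm_bounded (summable_master.mul_left C)
  simpa using hg

lemma summable_a : Summable a := by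
  apply summable_of_le_master
  intro j
  rw [abs_of_nonneg (a_nonneg j)]
  nlinarith [a_nonneg j, Nat.cast_nonneg (α := ℝ) j]

lemma summable_ja : Summable (fun j : ℕ => (j:ℝ) * a j) := by
  apply summable_of_le_master
  intro j
  rw [abs_of_nonneg (mul_nonneg (Nat.cast_nonneg j) (a_nonneg j))]
  nlinarith [a_nonneg j, Nat.cast_nonneg (α := ℝ) j]

noncomputable def S : ℝ := ∑' j, a j

lemma tele_id (j : ℕ) : (4*(j:ℝ)-1) * a j = 4*(j:ℝ)^2*a j - 4*((j:ℝ)+1)^2*a (j+1) := by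
  rw [a_succ]
  have h2 : ((j:ℝ)+1) ≠ 0 := by positivity
  field_simp
  ring

lemma hasSum_4jm1 : HasSum (fun j : ℕ => (4*(j:ℝ)-1) * a j) 0 := by
  have key : HasSum (fun j : ℕ => (4*((j:ℝ)+1)-1) * a (j+1)) 1 := by
    have ht := telescope_hasSum (fun j : ℕ => 4*((j:ℝ)+1)^2*a (j+1)) ?_ ?_
    · have e1 : ∀ j : ℕ, (fun j : ℕ => 4*((j:ℝ)+1)^2*a (j+1)) j
          - (fun j : ℕ => 4*((j:ℝ)+1)^2*a (j+1)) (j+1)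
          = (4*((j:ℝ)+1)-1) * a (j+1) := by
        intro j
        have h := tele_id (j+1)
        push_cast at h ⊢
        linarith [h]
      have e2 : (fun j : ℕ => (fun j : ℕ => 4*((j:ℝ)+1)^2*a (j+1)) j
          - (fun j : ℕ => 4*((j:ℝ)+1)^2*a (j+1)) (j+1))
          = (fun j : ℕ => (4*((j:ℝ)+1)-1) * a (j+1)) := funext e1
      rw [e2] at ht
      simpa [a1] using ht
    · intro j
      have h := tele_id (j+1)
      have hn : 0 ≤ (4*((j:ℝ)+1)-1) * a (j+1) := by
        apply mul_nonneg _ (a_nonneg _)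
        have : (0:ℝ) ≤ (j:ℝ) := Nat.cast_nonneg j
        linarith
      push_cast at h ⊢
      linarith [h, hn]
    · apply squeeze_zero (fun j => mul_nonneg (by positivity) (a_nonneg _))
        (g := fun j : ℕ => 1/((j:ℝ)+1))
      · intro j
        have h2 : (0:ℝ) < (j:ℝ)+1 := by positivity
        rw [le_div_iff₀ h2]
        nlinarith [a_cube_bound j]
      · simpa using tendsto_one_div_add_atTop_nhds_zero_nat (𝕜 := ℝ)
  refine (hasSum_nat_add_iff' (f := fun j : ℕ => (4*(j:ℝ)-1) * a j) 1).1 ?_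
  have : (0:ℝ) - ∑ i ∈ Finset.range 1, (4*(i:ℝ)-1) * a i = 1 := by
    simp [a0]
  rw [this]
  have e3 : (fun j : ℕ => (4*((j+1:ℕ):ℝ)-1) * a (j+1))
      = (fun j : ℕ => (4*((j:ℝ)+1)-1) * a (j+1)) := by
    funext j; push_cast; ring
  exact e3 ▸ key

lemma hasSum_a : HasSum a S := summable_a.hasSum

lemma hasSum_ja : HasSum (fun j : ℕ => (j:ℝ) * a j) (S/4) := by
  have h1 := hasSum_4jm1.add hasSum_a
  have e : (fun j : ℕ => (4*(j:ℝ)-1) * a j + a j) = fun j : ℕ => 4 * ((j:ℝ) * a j) := by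
    funext j; ring
  rw [e, zero_add] at h1
  have := h1.div_const 4
  simpa [mul_div_assoc, mul_comm] using this

lemma tsum_ja : ∑' j : ℕ, (j:ℝ) * a j = S/4 := hasSum_ja.tsum_eq

lemma S_ge_one : 1 ≤ S := by
  have := le_hasSum hasSum_a 0 (fun j _ => a_nonneg j)
  simpa [a0] using this

lemma S_pos : 0 < S := lt_of_lt_of_le one_pos S_ge_one

lemma S_le : S ≤ 3/2 := by
  have h1 : ∑' j : ℕ, a (j+1) ≤ 1/2 := by
    have hsum : Summable (fun j : ℕ => a (j+1)) := (summable_nat_add_iff 1).2 summable_a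
    have hb : Summable (fun j : ℕ => (1/2) * (1/((j:ℝ)+1) - 1/((j:ℝ)+1+1))) :=
      (hasSum_inv_succ.mul_left (1/2)).summable
    calc ∑' j : ℕ, a (j+1) ≤ ∑' j : ℕ, (1/2) * (1/((j:ℝ)+1) - 1/((j:ℝ)+1+1)) := by
          apply Summable.tsum_le_tsum _ hsum hb
          intro j
          have h2 : (0:ℝ) < (j:ℝ)+1 := by positivity
          have key : 1/(4*((j:ℝ)+1)^3) ≤ (1/2) * (1/((j:ℝ)+1) - 1/((j:ℝ)+1+1)) := by
            have e : 1/((j:ℝ)+1) - 1/((j:ℝ)+1+1) = 1/(((j:ℝ)+1)*((j:ℝ)+2)) := by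
              rw [div_sub_div _ _ (by positivity) (by positivity), one_mul, mul_one]
              congr 1 <;> ring
            rw [e, mul_one_div, div_le_div_iff₀ (by positivity) (by positivity)]
            nlinarith [h2, mul_pos h2 h2, sq_nonneg ((j:ℝ)+1)]
          linarith [a_le j, key]
      _ = 1/2 := by
          rw [(hasSum_inv_succ.mul_left (1/2)).tsum_eq]
          norm_num
  have h2 : S = a 0 + ∑' j : ℕ, a (j+1) := by
    rw [S, Summable.tsum_eq_zero_add summable_a]
  rw [h2, a0]
  linarith

/-! ### Facts about `N` -/

lemma summable_pow (y : ℝ) (hy : |y| ≤ 1) : Summable (fun j : ℕ => a j * y^(2*j)) := by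
  apply summable_of_le_master
  intro j
  have h1 : |y^(2*j)| ≤ 1 := by
    rw [abs_pow]
    exact pow_le_one₀ (abs_nonneg y) hy
  rw [abs_mul, abs_of_nonneg (a_nonneg j)]
  calc a j * |y^(2*j)| ≤ a j * 1 := mul_le_mul_of_nonneg_left h1 (a_nonneg j)
    _ ≤ ((j:ℝ)+4) * a j := by nlinarith [a_nonneg j, Nat.cast_nonneg (α := ℝ) j]

lemma summable_jpow (y : ℝ) (hy : |y| ≤ 1) :
    Summable (fun j : ℕ => 2*(j:ℝ) * a j * y^(2*j)) := by
  apply summable_of_le_masterC 2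
  intro j
  have h1 : |y^(2*j)| ≤ 1 := by
    rw [abs_pow]; exact pow_le_one₀ (abs_nonneg y) hy
  rw [abs_mul, abs_mul, abs_of_nonneg (a_nonneg j), abs_of_nonneg
    (by positivity : (0:ℝ) ≤ 2*(j:ℝ))]
  calc 2*(j:ℝ) * a j * |y^(2*j)| ≤ 2*(j:ℝ) * a j * 1 := by
        apply mul_le_mul_of_nonneg_left h1
        exact mul_nonneg (by positivity) (a_nonneg j)
    _ ≤ 2 * (((j:ℝ)+4) * a j) := by nlinarith [a_nonneg j, Nat.cast_nonneg (α := ℝ) j]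

lemma N_eq (y : ℝ) : N y = ∑' j : ℕ, a j * y ^ (2*j) := rfl

/-- `M y = y * N' y` -/
noncomputable def M (y : ℝ) : ℝ := ∑' j : ℕ, 2*(j:ℝ) * a j * y^(2*j)

lemma N_ge_one (y : ℝ) (hy : |y| ≤ 1) : 1 ≤ N y := by
  rw [N_eq]
  have h0 : a 0 * y^(2*0) = 1 := by simp [a0]
  have := le_hasSum (summable_pow y hy).hasSum 0 (fun j _ => ?_)
  · rw [h0] at this; exact this
  · have : y^(2*j) = (y^j)^2 := by rw [← pow_mul, mul_comm]
    rw [this]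
    exact mul_nonneg (a_nonneg j) (sq_nonneg _)

lemma N_pos (y : ℝ) (hy : |y| ≤ 1) : 0 < N y := lt_of_lt_of_le one_pos (N_ge_one y hy)

lemma hasSum_M1 : HasSum (fun j : ℕ => 2*(j:ℝ) * a j) (S/2) := by
  have := hasSum_ja.mul_left 2
  have e : (fun j : ℕ => 2 * ((j:ℝ) * a j)) = fun j : ℕ => 2*(j:ℝ) * a j := by
    funext j; ring
  rw [e] at this
  convert this using 1
  exacts [rfl, by ring]

lemma pow_even_le_one (y : ℝ) (hy : |y| ≤ 1) (j : ℕ) : y^(2*j) ≤ 1 := by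
  calc y^(2*j) ≤ |y^(2*j)| := le_abs_self _
    _ = |y|^(2*j) := by rw [abs_pow]
    _ ≤ 1 := pow_le_one₀ (abs_nonneg y) hy

lemma pow_even_nonneg (y : ℝ) (j : ℕ) : 0 ≤ y^(2*j) := by
  have : y^(2*j) = (y^j)^2 := by rw [← pow_mul, mul_comm]
  rw [this]; exact sq_nonneg _

lemma M_le (y : ℝ) (hy : |y| ≤ 1) : M y ≤ 3/4 := by
  have h1 : M y ≤ S/2 := by
    rw [M, ← hasSum_M1.tsum_eq]
    apply Summable.tsum_le_tsum _ (summable_jpow y hy) hasSum_M1.summable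
    intro j
    have hmn : 0 ≤ 2*(j:ℝ)*a j := mul_nonneg (by positivity) (a_nonneg j)
    calc 2*(j:ℝ) * a j * y^(2*j) ≤ 2*(j:ℝ) * a j * 1 :=
          mul_le_mul_of_nonneg_left (pow_even_le_one y hy j) hmn
      _ = 2*(j:ℝ) * a j := mul_one _
  linarith [S_le]

lemma M_nonneg (y : ℝ) : 0 ≤ M y := by
  rw [M]
  apply tsum_nonneg
  intro j
  exact mul_nonneg (mul_nonneg (by positivity) (a_nonneg j)) (pow_even_nonneg y j)

/-- continuity of `N` on `[-1,1]` -/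
lemma continuousOn_N : ContinuousOn N (Set.Icc (-1:ℝ) 1) := by
  have key : TendstoUniformlyOn (fun (t : Finset ℕ) (y : ℝ) => ∑ j ∈ t, a j * y^(2*j))
      (fun y => ∑' j : ℕ, a j * y^(2*j)) Filter.atTop (Set.Icc (-1:ℝ) 1) := by
    apply tendstoUniformlyOn_tsum summable_a
    intro j y hy
    have hy1 : |y| ≤ 1 := abs_le.2 ⟨hy.1, hy.2⟩
    rw [Real.norm_eq_abs, abs_mul, abs_of_nonneg (a_nonneg j)]
    calc a j * |y^(2*j)| ≤ a j * 1 := by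
          apply mul_le_mul_of_nonneg_left _ (a_nonneg j)
          rw [abs_pow]; exact pow_le_one₀ (abs_nonneg y) hy1
      _ = a j := mul_one _
  have : ContinuousOn (fun y => ∑' j : ℕ, a j * y^(2*j)) (Set.Icc (-1:ℝ) 1) := by
    apply key.continuousOn
    apply Filter.Eventually.frequently
    filter_upwards with t
    exact (continuous_finset_sum t (fun j _ => by continuity)).continuousOn
  exact this

/-- the derivative of `N` inside `(-1,1)` -/
noncomputable def ND (y : ℝ) : ℝ := ∑' j : ℕ, a j * ((2*j : ℕ) * y^(2*j-1))

lemma hasDerivAt_N (y : ℝ) (hy : y ∈ Set.Ioo (-1:ℝ) 1) : HasDerivAt N (ND y) y := by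
  have := hasDerivAt_tsum_of_isPreconnected
    (u := fun j : ℕ => 2 * (((j:ℝ)+4) * a j))
    (g := fun (j : ℕ) (z : ℝ) => a j * z^(2*j))
    (g' := fun (j : ℕ) (z : ℝ) => a j * ((2*j : ℕ) * z^(2*j-1)))
    (summable_master.mul_left 2) isOpen_Ioo (convex_Ioo (-1:ℝ) 1).isPreconnected
    (fun j z _ => (hasDerivAt_pow (2*j) z).const_mul (a j))
    ?_ (Set.mem_Ioo.2 ⟨by norm_num, by norm_num⟩ : (0:ℝ) ∈ Set.Ioo (-1:ℝ) 1) ?_ hy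
  · exact this
  · intro j z hz
    have hz1 : |z| ≤ 1 := le_of_lt (abs_lt.2 ⟨hz.1, hz.2⟩)
    rw [Real.norm_eq_abs, abs_mul, abs_mul, abs_of_nonneg (a_nonneg j)]
    have h1 : |z^(2*j-1)| ≤ 1 := by
      rw [abs_pow]; exact pow_le_one₀ (abs_nonneg z) hz1
    have h2 : |((2*j : ℕ) : ℝ)| = 2*(j:ℝ) := by
      rw [abs_of_nonneg (by positivity)]; push_cast; ring
    rw [h2]
    calc a j * (2*(j:ℝ) * |z^(2*j-1)|) ≤ a j * (2*(j:ℝ) * 1) := by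
          apply mul_le_mul_of_nonneg_left _ (a_nonneg j)
          exact mul_le_mul_of_nonneg_left h1 (by positivity)
      _ ≤ 2 * (((j:ℝ)+4) * a j) := by nlinarith [a_nonneg j, Nat.cast_nonneg (α := ℝ) j]
  · apply summable_of_ne_finset_zero (s := {0})
    intro j hj
    have hj0 : j ≠ 0 := by simpa using hj
    have : (0:ℝ)^(2*j) = 0 := by
      apply zero_pow
      omega
    simp [this]

lemma y_mul_ND (y : ℝ) (hy : |y| ≤ 1) : y * ND y = M y := by
  rw [ND, M, ← tsum_mul_left]
  congr 1
  funext j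
  rcases Nat.eq_zero_or_pos j with h | h
  · subst h; simp
  · have e : 2*j - 1 + 1 = 2*j := by omega
    have : y * y^(2*j-1) = y^(2*j) := by
      rw [← pow_succ', e]
    push_cast
    calc y * (a j * ((2*(j:ℝ)) * y^(2*j-1))) = 2*(j:ℝ) * a j * (y * y^(2*j-1)) := by ring
      _ = 2*(j:ℝ) * a j * y^(2*j) := by rw [this]

/-! ### Forward direction -/

/-- coefficients of `Fc` -/
noncomputable def pc (c : ℝ) : ℕ → ℝ := fun k =>
  if k = 0 then 1 else if k = 1 then 1/4 else if k = 2 then 1/64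
  else if k = 3 then 1/256 else if k = 4 then c else 0

lemma Fc_eq_sum (c y : ℝ) : Fc c y = ∑ k ∈ Finset.range 5, pc c k * y^(2*k) := by
  simp [Fc, pc, Finset.sum_range_succ]
  ring

/-- partial geometric sums -/
noncomputable def sig (j : ℕ) (y : ℝ) : ℝ := ∑ i ∈ Finset.range j, (y^2)^i

lemma pow_sub_one (j : ℕ) (y : ℝ) : y^(2*j) - 1 = (y^2 - 1) * sig j y := by
  have h := geom_sum_mul (y^2) j
  have h2 : (y^2)^j = y^(2*j) := by rw [← pow_mul]
  rw [h2] at h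
  rw [sig]
  linear_combination -h

lemma sig_abs_le (j : ℕ) (y : ℝ) (hy : |y| ≤ 1) : |sig j y| ≤ j := by
  rw [sig]
  calc |∑ i ∈ Finset.range j, (y^2)^i| ≤ ∑ i ∈ Finset.range j, |(y^2)^i| :=
        Finset.abs_sum_le_sum_abs _ _
    _ ≤ ∑ i ∈ Finset.range j, 1 := by
        apply Finset.sum_le_sum
        intro i _
        rw [abs_pow]
        apply pow_le_one₀ (abs_nonneg _)
        rw [abs_pow]
        exact pow_le_one₀ (abs_nonneg y) hy
    _ = j := by simp

lemma summable_asig (y : ℝ) (hy : |y| ≤ 1) : Summable (fun j : ℕ => a j * sig j y) := by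
  apply summable_of_le_master
  intro j
  rw [abs_mul, abs_of_nonneg (a_nonneg j)]
  calc a j * |sig j y| ≤ a j * j := mul_le_mul_of_nonneg_left (sig_abs_le j y hy) (a_nonneg j)
    _ ≤ ((j:ℝ)+4) * a j := by nlinarith [a_nonneg j, Nat.cast_nonneg (α := ℝ) j]

noncomputable def Psi1 (y : ℝ) : ℝ := ∑' j : ℕ, a j * sig j y

lemma N_split (y : ℝ) (hy : |y| ≤ 1) : N y = S + (y^2-1) * Psi1 y := by
  rw [N_eq, Psi1, ← tsum_mul_left]
  show _ = (∑' j : ℕ, a j) + ∑' j : ℕ, (y^2-1) * (a j * sig j y)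
  rw [← Summable.tsum_add summable_a ((summable_asig y hy).mul_left _)]
  congr 1
  funext j
  linear_combination a j * pow_sub_one j y

lemma Fc_split (c y : ℝ) :
    Fc c y = Fc c 1 + (y^2-1) * ∑ k ∈ Finset.range 5, pc c k * sig k y := by
  rw [Fc_eq_sum, Fc_eq_sum c 1, Finset.mul_sum, ← Finset.sum_add_distrib]
  apply Finset.sum_congr rfl
  intro k _
  rw [one_pow]
  linear_combination pc c k * pow_sub_one k y

lemma Psi1_one : Psi1 1 = S/4 := by
  rw [Psi1, ← tsum_ja]
  congr 1
  funext j
  simp [sig, mul_comm]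

lemma sig_one (k : ℕ) : sig k 1 = k := by simp [sig]

lemma continuousOn_Psi1 : ContinuousOn Psi1 (Set.Icc (-1:ℝ) 1) := by
  have key : TendstoUniformlyOn (fun (t : Finset ℕ) (y : ℝ) => ∑ j ∈ t, a j * sig j y)
      (fun y => ∑' j : ℕ, a j * sig j y) Filter.atTop (Set.Icc (-1:ℝ) 1) := by
    apply tendstoUniformlyOn_tsum summable_master
    intro j y hy
    have hy1 : |y| ≤ 1 := abs_le.2 ⟨hy.1, hy.2⟩
    rw [Real.norm_eq_abs, abs_mul, abs_of_nonneg (a_nonneg j)]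
    calc a j * |sig j y| ≤ a j * j :=
          mul_le_mul_of_nonneg_left (sig_abs_le j y hy1) (a_nonneg j)
      _ ≤ ((j:ℝ)+4) * a j := by nlinarith [a_nonneg j, Nat.cast_nonneg (α := ℝ) j]
  apply key.continuousOn
  apply Filter.Eventually.frequently
  filter_upwards with t
  apply (continuous_finset_sum t (fun j _ => ?_)).continuousOn
  unfold sig
  continuity

lemma forward (c : ℝ) (hc : 0 ≤ c)
    (hm : MonotoneOn (fun y => Fc c y / N y) (Set.Icc (0:ℝ) 1)) : 5/768 ≤ c := by
  set F1 : ℝ := Fc c 1 with hF1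
  have hN1 : N 1 = S := by
    rw [N_eq]
    simp [S]
  -- the monotonicity inequality
  have hchi : ∀ y ∈ Set.Icc (0:ℝ) 1, 0 ≤ F1 * N y - S * Fc c y := by
    intro y hy
    have hy1 : |y| ≤ 1 := by
      rw [abs_le]; constructor <;> [linarith [hy.1]; exact hy.2]
    have h1 := hm hy (Set.mem_Icc.2 ⟨by norm_num, le_refl 1⟩) hy.2
    have hNy := N_pos y hy1
    have hN1p : (0:ℝ) < N 1 := N_pos 1 (by norm_num)
    rw [div_le_div_iff₀ hNy hN1p] at h1
    rw [hN1, ← hF1] at h1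
    linarith [h1]
  -- the function Ψ
  set Psi2 : ℝ → ℝ := fun y => ∑ k ∈ Finset.range 5, pc c k * sig k y with hPsi2
  have key : ∀ y ∈ Set.Ico (0:ℝ) 1, F1 * Psi1 y - S * Psi2 y ≤ 0 := by
    intro y hy
    have hy1 : |y| ≤ 1 := by
      rw [abs_le]; constructor <;> [linarith [hy.1]; linarith [hy.2]]
    have h := hchi y (Set.mem_Icc.2 ⟨hy.1, le_of_lt hy.2⟩)
    rw [N_split y hy1, Fc_split c y] at h
    have hneg : y^2 - 1 < 0 := by nlinarith [hy.1, hy.2]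
    -- 0 ≤ F1*(S + (y²-1)Ψ₁) - S*(F1 + (y²-1)Ψ₂) = (y²-1)(F1 Ψ₁ - S Ψ₂)
    have h2 : 0 ≤ (y^2-1) * (F1 * Psi1 y - S * Psi2 y) := by
      rw [hPsi2]
      nlinarith [h]
    nlinarith [h2, hneg]
  -- pass to the limit y → 1
  have hcont : ContinuousWithinAt (fun y => F1 * Psi1 y - S * Psi2 y) (Set.Ico (0:ℝ) 1) 1 := by
    have h1 : ContinuousWithinAt (fun y => F1 * Psi1 y - S * Psi2 y) (Set.Icc (-1:ℝ) 1) 1 := by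
      apply ContinuousOn.continuousWithinAt _ (by norm_num : (1:ℝ) ∈ Set.Icc (-1:ℝ) 1)
      apply ContinuousOn.sub
      · exact continuousOn_const.mul continuousOn_Psi1
      · apply Continuous.continuousOn
        exact continuous_const.mul (continuous_finset_sum _ (fun k _ => by
          unfold sig; continuity))
    exact h1.mono (fun y hy => Set.mem_Icc.2 ⟨by linarith [hy.1], le_of_lt hy.2⟩)
  have hne : (nhdsWithin (1:ℝ) (Set.Ico (0:ℝ) 1)).NeBot := by
    rw [← mem_closure_iff_nhdsWithin_neBot, closure_Ico (by norm_num : (0:ℝ) ≠ 1)]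
    exact Set.mem_Icc.2 ⟨by norm_num, le_refl 1⟩
  have hlim : F1 * Psi1 1 - S * Psi2 1 ≤ 0 := by
    apply le_of_tendsto hcont.tendsto
    filter_upwards [self_mem_nhdsWithin] with y hy
    exact key y hy
  -- compute the limit values
  rw [Psi1_one] at hlim
  have hPsi21 : Psi2 1 = 75/256 + 4*c := by
    rw [hPsi2]
    simp [Finset.sum_range_succ, sig_one, pc]
    ring
  rw [hPsi21] at hlim
  have hF1v : F1 = 325/256 + c := by rw [hF1, Fc]; norm_num
  rw [hF1v] at hlim
  -- S*(325/1024 + c/4) ≤ S*(75/256+4c)  with S > 0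
  nlinarith [hlim, S_pos]

/-! ### Backward direction : series rearrangement -/

/-- coefficient sequence of `(y F') N - F (y N')` at the critical value `c₀ = 5/768`. -/
noncomputable def cc (m : ℕ) : ℝ :=
  ∑ k ∈ Finset.range 5, (if k ≤ m then (2*(k:ℝ) - m) * pc (5/768) k * a (m-k) else 0)

lemma pc0_nonneg (k : ℕ) : 0 ≤ pc (5/768) k := by
  unfold pc; split_ifs <;> norm_num

lemma pc0_le_one (k : ℕ) : pc (5/768) k ≤ 1 := by
  unfold pc; split_ifs <;> norm_num

noncomputable def G (y : ℝ) (k m : ℕ) : ℝ :=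
  if k ≤ m then 2*(2*(k:ℝ) - m) * pc (5/768) k * a (m-k) * y^(2*m) else 0

lemma G_shift (y : ℝ) (k j : ℕ) :
    G y k (j+k) = 2*((k:ℝ) - j) * pc (5/768) k * a j * y^(2*(j+k)) := by
  unfold G
  rw [if_pos (Nat.le_add_left k j)]
  have h1 : j + k - k = j := by omega
  rw [h1]
  push_cast
  ring_nf

lemma summable_G (y : ℝ) (hy : |y| ≤ 1) (k : ℕ) (hk : k ≤ 4) : Summable (G y k) := by
  rw [← summable_nat_add_iff k]
  apply summable_of_le_masterC 2
  intro j
  rw [G_shift]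
  have h1 : |y^(2*(j+k))| ≤ 1 := by
    rw [abs_pow]; exact pow_le_one₀ (abs_nonneg y) hy
  have h2 : |(k:ℝ) - j| ≤ (j:ℝ) + 4 := by
    rw [abs_sub_le_iff]
    have hk4 : (k:ℝ) ≤ 4 := by exact_mod_cast hk
    have hj0 : (0:ℝ) ≤ (j:ℝ) := Nat.cast_nonneg j
    have hk0 : (0:ℝ) ≤ (k:ℝ) := Nat.cast_nonneg k
    constructor <;> linarith
  have hb0 : (0:ℝ) ≤ a j := a_nonneg j
  have hb1 : 0 ≤ pc (5/768) k := pc0_nonneg k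
  have habs : |2*((k:ℝ) - j) * pc (5/768) k * a j * y^(2*(j+k))|
      = 2*|(k:ℝ) - j| * (pc (5/768) k * (a j * |y^(2*(j+k))|)) := by
    rw [abs_mul, abs_mul, abs_mul, abs_of_nonneg hb1, abs_of_nonneg hb0]
    rw [abs_mul, abs_of_nonneg (by norm_num : (0:ℝ) ≤ 2)]
    ring
  rw [habs]
  have t1 : 2*|(k:ℝ) - j| * (pc (5/768) k * (a j * |y^(2*(j+k))|))
      ≤ 2*((j:ℝ)+4) * (1 * (a j * 1)) := by
    apply mul_le_mul (by linarith [h2]) _ _ (by positivity)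
    · apply mul_le_mul (pc0_le_one k) _ _ (by norm_num)
      · exact mul_le_mul_of_nonneg_left h1 hb0
      · exact mul_nonneg hb0 (abs_nonneg _)
    · exact mul_nonneg hb1 (mul_nonneg hb0 (abs_nonneg _))
  calc 2*|(k:ℝ) - j| * (pc (5/768) k * (a j * |y^(2*(j+k))|))
      ≤ 2*((j:ℝ)+4) * (1 * (a j * 1)) := t1
    _ = 2 * (((j:ℝ)+4) * a j) := by ring

lemma step1 (y : ℝ) (hy : |y| ≤ 1) (k : ℕ) (hk : k ≤ 4) :
    pc (5/768) k * (2*(k:ℝ)*y^(2*k) * N y - y^(2*k) * M y) = ∑' m : ℕ, G y k m := by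
  have hs1 : Summable (fun j : ℕ => 2*(k:ℝ) * y^(2*k) * (a j * y^(2*j))) :=
    (summable_pow y hy).mul_left _
  have hs2 : Summable (fun j : ℕ => y^(2*k) * (2*(j:ℝ) * a j * y^(2*j))) :=
    (summable_jpow y hy).mul_left _
  have e1 : 2*(k:ℝ)*y^(2*k) * N y - y^(2*k) * M y
      = ∑' j : ℕ, (2*(k:ℝ) * y^(2*k) * (a j * y^(2*j)) - y^(2*k) * (2*(j:ℝ) * a j * y^(2*j))) := by
    rw [N_eq, M, ← tsum_mul_left, ← tsum_mul_left, ← Summable.tsum_sub hs1 hs2]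
  rw [e1, ← tsum_mul_left]
  rw [← (Summable.sum_add_tsum_nat_add k (summable_G y hy k hk))]
  have e2 : ∑ i ∈ Finset.range k, G y k i = 0 := by
    apply Finset.sum_eq_zero
    intro i hi
    rw [Finset.mem_range] at hi
    unfold G
    rw [if_neg (by omega)]
  rw [e2, zero_add]
  congr 1
  funext j
  rw [G_shift]
  have e3 : y^(2*k) * y^(2*j) = y^(2*(j+k)) := by
    rw [← pow_add]
    congr 1
    omega
  calc pc (5/768) k * (2*(k:ℝ) * y^(2*k) * (a j * y^(2*j)) - y^(2*k) * (2*(j:ℝ) * a j * y^(2*j)))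
      = 2*((k:ℝ) - j) * pc (5/768) k * a j * (y^(2*k) * y^(2*j)) := by ring
    _ = 2*((k:ℝ) - j) * pc (5/768) k * a j * y^(2*(j+k)) := by rw [e3]

lemma G_sum_eq (y : ℝ) (m : ℕ) :
    ∑ k ∈ Finset.range 5, G y k m = 2 * cc m * y^(2*m) := by
  rw [cc, mul_comm (2:ℝ), mul_assoc, Finset.sum_mul]
  apply Finset.sum_congr rfl
  intro k _
  unfold G
  split_ifs with h
  · ring
  · simp

lemma summable_Gsum (y : ℝ) (hy : |y| ≤ 1) :
    Summable (fun m : ℕ => 2 * cc m * y^(2*m)) := by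
  have h : Summable (fun m : ℕ => ∑ k ∈ Finset.range 5, G y k m) := by
    apply summable_sum
    intro k hk
    exact summable_G y hy k (by rw [Finset.mem_range] at hk; omega)
  exact h.congr (fun m => G_sum_eq y m)

/-- the main rearrangement identity -/
lemma idA (y : ℝ) (hy : |y| ≤ 1) :
    (∑ k ∈ Finset.range 5, 2*(k:ℝ)*pc (5/768) k*y^(2*k)) * N y
    - (∑ k ∈ Finset.range 5, pc (5/768) k * y^(2*k)) * M y
    = ∑' m : ℕ, 2 * cc m * y^(2*m) := by
  have e1 : (∑ k ∈ Finset.range 5, 2*(k:ℝ)*pc (5/768) k*y^(2*k)) * N y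
      - (∑ k ∈ Finset.range 5, pc (5/768) k * y^(2*k)) * M y
      = ∑ k ∈ Finset.range 5, pc (5/768) k * (2*(k:ℝ)*y^(2*k) * N y - y^(2*k) * M y) := by
    rw [Finset.sum_mul, Finset.sum_mul, ← Finset.sum_sub_distrib]
    apply Finset.sum_congr rfl
    intro k _
    ring
  rw [e1]
  have e2 : ∀ k ∈ Finset.range 5,
      pc (5/768) k * (2*(k:ℝ)*y^(2*k) * N y - y^(2*k) * M y) = ∑' m : ℕ, G y k m := by
    intro k hk
    exact step1 y hy k (by rw [Finset.mem_range] at hk; omega)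
  rw [Finset.sum_congr rfl e2]
  rw [← Summable.tsum_finsetSum (fun k hk => summable_G y hy k (by rw [Finset.mem_range] at hk; omega))]
  exact tsum_congr (fun m => G_sum_eq y m)

lemma cc0 : cc 0 = 0 := by
  rw [cc]
  simp [Finset.sum_range_succ, pc, a0]

lemma cc1 : cc 1 = 0 := by
  rw [cc]
  simp [Finset.sum_range_succ, pc, a0, a1]
  norm_num

lemma cc2 : cc 2 = 0 := by
  rw [cc]
  simp [Finset.sum_range_succ, pc]
  norm_num [a0, a1, a2]

lemma cc3 : cc 3 = 0 := by
  rw [cc]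
  simp [Finset.sum_range_succ, pc]
  norm_num [a0, a1, a2, a3]

lemma cc4 : cc 4 = 245/12288 := by
  rw [cc]
  simp [Finset.sum_range_succ, pc]
  norm_num [a0, a1, a2, a3, a4]

lemma cc5 : cc 5 = 0 := by
  rw [cc]
  simp [Finset.sum_range_succ, pc]
  norm_num [a1, a2, a3, a4, a5]

lemma cc6 : cc 6 ≤ 0 := by
  rw [cc]
  simp [Finset.sum_range_succ, pc]
  norm_num [a2, a3, a4, a5, a6]

lemma cc7 : cc 7 ≤ 0 := by
  rw [cc]
  simp [Finset.sum_range_succ, pc]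
  norm_num [a3, a4, a5, a6, a7]

lemma cc_nonpos (m : ℕ) (hm : 6 ≤ m) : cc m ≤ 0 := by
  rcases eq_or_ne m 6 with h | h6
  · rw [h]; exact cc6
  rcases eq_or_ne m 7 with h | h7
  · rw [h]; exact cc7
  have hm8 : 8 ≤ m := by omega
  rw [cc]
  apply Finset.sum_nonpos
  intro k hk
  rw [Finset.mem_range] at hk
  split_ifs with h
  · apply mul_nonpos_of_nonpos_of_nonneg _ (a_nonneg _)
    apply mul_nonpos_of_nonpos_of_nonneg _ (pc0_nonneg k)
    have h1 : (k:ℝ) ≤ 4 := by exact_mod_cast Nat.lt_succ_iff.mp hk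
    have h2 : (8:ℝ) ≤ (m:ℝ) := by exact_mod_cast hm8
    linarith
  · exact le_refl 0

lemma N_one : N 1 = S := by
  rw [N_eq]; simp [S]

lemma M_one : M 1 = S/2 := by
  rw [M, ← hasSum_M1.tsum_eq]
  simp

lemma summable_cc : Summable cc := by
  have h := summable_Gsum 1 (by norm_num)
  simp only [one_pow, mul_one] at h
  have h2 := h.mul_left (1/2)
  apply h2.congr
  intro m
  ring

lemma tsum_cc : ∑' m : ℕ, cc m = 0 := by
  have h := idA 1 (by norm_num)
  simp only [one_pow, mul_one] at h
  rw [N_one, M_one] at h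
  have e1 : (∑ k ∈ Finset.range 5, 2*(k:ℝ)*pc (5/768) k) = 245/384 := by
    simp [Finset.sum_range_succ, pc]
    norm_num
  have e2 : (∑ k ∈ Finset.range 5, pc (5/768) k) = 245/192 := by
    simp [Finset.sum_range_succ, pc]
    norm_num
  rw [e1, e2] at h
  have h3 : ∑' m : ℕ, 2 * cc m = 2 * ∑' m : ℕ, cc m := by
    rw [← tsum_mul_left]
  rw [h3] at h
  linarith [h]

lemma tsum_cc_tail : ∑' j : ℕ, cc (j+6) = -(245/12288) := by
  have h := (Summable.sum_add_tsum_nat_add 6 summable_cc).symm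
  rw [tsum_cc] at h
  have e : ∑ i ∈ Finset.range 6, cc i = 245/12288 := by
    simp [Finset.sum_range_succ, cc0, cc1, cc2, cc3, cc4, cc5]
  rw [e] at h
  linarith [h]

lemma T_nonneg (y : ℝ) (hy0 : 0 ≤ y) (hy1 : y ≤ 1) :
    0 ≤ ∑' m : ℕ, 2 * cc m * y^(2*m) := by
  have hya : |y| ≤ 1 := by rw [abs_of_nonneg hy0]; exact hy1
  have hsum := summable_Gsum y hya
  rw [← Summable.sum_add_tsum_nat_add 6 hsum]
  have head : ∑ m ∈ Finset.range 6, 2 * cc m * y^(2*m) = 2*(245/12288)*y^8 := by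
    simp [Finset.sum_range_succ, cc0, cc1, cc2, cc3, cc4, cc5]
  rw [head]
  have hshift : Summable (fun j : ℕ => cc (j+6)) := (summable_nat_add_iff 6).2 summable_cc
  have htail : ∑' j : ℕ, 2 * cc (j+6) * y^12 ≤ ∑' j : ℕ, 2 * cc (j+6) * y^(2*(j+6)) := by
    apply Summable.tsum_le_tsum _ ((hshift.mul_left 2).mul_right _) ((summable_nat_add_iff 6).2 hsum)
    intro j
    have hcc := cc_nonpos (j+6) (by omega)
    have hp1 : y^(2*(j+6)) ≤ y^12 := by
      have e : 2*(j+6) = 12 + 2*j := by omega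
      rw [e, pow_add]
      have h1 : y^(2*j) ≤ 1 := pow_le_one₀ hy0 hy1
      nlinarith [pow_nonneg hy0 12, pow_nonneg hy0 (2*j)]
    nlinarith [hcc, hp1]
  have htv : ∑' j : ℕ, 2 * cc (j+6) * y^12 = 2 * (-(245/12288)) * y^12 := by
    have : (fun j : ℕ => 2 * cc (j+6) * y^12) = (fun j : ℕ => (2*y^12) * cc (j+6)) := by
      funext j; ring
    rw [this, tsum_mul_left, tsum_cc_tail]
    ring
  have hfin : 0 ≤ 2*(245/12288)*y^8 + 2 * (-(245/12288)) * y^12 := by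
    have h1 : y^12 ≤ y^8 := by
      have e : (12:ℕ) = 8 + 4 := by norm_num
      rw [e, pow_add]
      have h2 : y^4 ≤ 1 := pow_le_one₀ hy0 hy1
      nlinarith [pow_nonneg hy0 8, pow_nonneg hy0 4]
    nlinarith [h1]
  rw [htv] at htail
  linarith [htail, hfin]


lemma hasDerivAt_Fc (c y : ℝ) :
    HasDerivAt (Fc c) (y/2 + y^3/16 + 3*y^5/128 + 8*c*y^7) y := by
  have h : HasDerivAt (fun y : ℝ => 1 + y^2/4 + y^4/64 + y^6/256 + c*y^8)
      (y/2 + y^3/16 + 3*y^5/128 + 8*c*y^7) y := by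
    have h0 := ((((hasDerivAt_const y (1:ℝ)).add ((hasDerivAt_pow 2 y).div_const 4)).add
      ((hasDerivAt_pow 4 y).div_const 64)).add ((hasDerivAt_pow 6 y).div_const 256)).add
      ((hasDerivAt_pow 8 y).const_mul c)
    convert h0 using 1
    norm_num
    exacts [rfl, rfl, rfl, by norm_num; ring]
  exact h

lemma sum_2kpc (y : ℝ) : (∑ k ∈ Finset.range 5, 2*(k:ℝ)*pc (5/768) k*y^(2*k))
    = y^2/2 + y^4/16 + 3*y^6/128 + 5*y^8/96 := by
  simp [Finset.sum_range_succ, pc]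
  norm_num
  ring

lemma sum_pc (y : ℝ) : (∑ k ∈ Finset.range 5, pc (5/768) k * y^(2*k))
    = 1 + y^2/4 + y^4/64 + y^6/256 + 5*y^8/768 := by
  simp [Finset.sum_range_succ, pc]
  norm_num
  ring

lemma num_nonneg (c : ℝ) (h5 : 5/768 ≤ c) (y : ℝ) (hy : y ∈ Set.Ioo (0:ℝ) 1) :
    0 ≤ (y/2 + y^3/16 + 3*y^5/128 + 8*c*y^7) * N y - Fc c y * ND y := by
  have hy0 : 0 < y := hy.1
  have hy1 : |y| ≤ 1 := by rw [abs_of_nonneg (le_of_lt hy0)]; exact le_of_lt hy.2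
  have em : y * ND y = M y := y_mul_ND y hy1
  have hid := idA y hy1
  rw [sum_2kpc, sum_pc] at hid
  have hT := T_nonneg y (le_of_lt hy0) (le_of_lt hy.2)
  rw [← hid] at hT
  have h8 : 0 ≤ (c - 5/768)*y^8*(8*N y - M y) := by
    apply mul_nonneg (mul_nonneg (by linarith) (by positivity))
    have := N_ge_one y hy1
    have := M_le y hy1
    linarith
  have key : 0 ≤ y * ((y/2 + y^3/16 + 3*y^5/128 + 8*c*y^7) * N y - Fc c y * ND y) := by
    have calc_id : y * ((y/2 + y^3/16 + 3*y^5/128 + 8*c*y^7) * N y - Fc c y * ND y)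
        = ((y^2/2 + y^4/16 + 3*y^6/128 + 5*y^8/96) * N y
          - (1 + y^2/4 + y^4/64 + y^6/256 + 5*y^8/768) * M y)
          + (c - 5/768)*y^8*(8*N y - M y) := by
      rw [← em, Fc]
      ring
    rw [calc_id]
    linarith [hT, h8]
  nlinarith [key, hy0]

lemma backward (c : ℝ) (h5 : 5/768 ≤ c) :
    MonotoneOn (fun y => Fc c y / N y) (Set.Icc (0:ℝ) 1) := by
  apply monotoneOn_of_deriv_nonneg (convex_Icc 0 1)
  · apply ContinuousOn.div
    · exact (Continuous.continuousOn (by unfold Fc; continuity))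
    · exact continuousOn_N.mono (fun y hy => Set.mem_Icc.2 ⟨by linarith [hy.1], hy.2⟩)
    · intro y hy
      have hy1 : |y| ≤ 1 := by rw [abs_le]; exact ⟨by linarith [hy.1], hy.2⟩
      exact ne_of_gt (N_pos y hy1)
  · rw [interior_Icc]
    intro y hy
    have hy1 : |y| ≤ 1 := by
      rw [abs_le]; exact ⟨by linarith [hy.1], le_of_lt hy.2⟩
    have hN := hasDerivAt_N y (Set.mem_Ioo.2 ⟨by linarith [hy.1], hy.2⟩)
    have hne : N y ≠ 0 := ne_of_gt (N_pos y hy1)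
    exact ((hasDerivAt_Fc c y).div hN hne).differentiableAt.differentiableWithinAt
  · rw [interior_Icc]
    intro y hy
    have hy1 : |y| ≤ 1 := by
      rw [abs_le]; exact ⟨by linarith [hy.1], le_of_lt hy.2⟩
    have hN := hasDerivAt_N y (Set.mem_Ioo.2 ⟨by linarith [hy.1], hy.2⟩)
    have hne : N y ≠ 0 := ne_of_gt (N_pos y hy1)
    have hd := ((hasDerivAt_Fc c y).div hN hne).deriv
    rw [show (fun y => Fc c y / N y) = Fc c / N from rfl, hd]
    apply div_nonneg _ (sq_nonneg _)
    exact num_nonneg c h5 y hy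

end St10

theorem stmt10 (c : ℝ) (hc : 0 ≤ c) :
    MonotoneOn (fun y => Fc c y / N y) (Set.Icc (0:ℝ) 1) ↔ 5/768 ≤ c := by
  constructor
  · exact St10.forward c hc
  · exact St10.backward c
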